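/- Let H₀ be an n×n complex diagonal matrix. Then the adjoint orbit O(H₀) = {g H₀ g⁻¹ : g ∈ GL(n,ℂ)}, i.e. the set of all matrices similar to H₀, is a closed subset of the space of n×n complex matrices. -/

import Mathlib

attribute [local instance] Matrix.frobeniusNormedAddCommGroup

open Polynomial Matrix

/-- Conjugation by a unit as an algebra homomorphism. -/
private def conjAlgHom {R A : Type*} [CommSemiring R] [Semiring A] [Algebra R A]
    (u : Aˣ) : A →ₐ[R] A where
  toFun a := ↑u * a * ↑u⁻¹
  map_one' := by simp
  map_mul' a b := by
    simp only [mul_assoc]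
    rw [Units.inv_mul_cancel_left]
  map_zero' := by simp
  map_add' a b := by simp [mul_add, add_mul]
  commutes' r := by
    simp only [Algebra.algebraMap_eq_smul_one]
    rw [mul_smul_comm, mul_one, smul_mul_assoc, Units.mul_inv]

/-- If two tuples have the same multiset of values, one is a permutation of the other. -/
private lemma exists_comp_perm {n : ℕ} {α : Type*} [LinearOrder α] {f g : Fin n → α}
    (h : Multiset.ofList (List.ofFn f) = Multiset.ofList (List.ofFn g)) :
    ∃ σ : Equiv.Perm (Fin n), f = g ∘ σ := by
  have hperm : (List.ofFn f).Perm (List.ofFn g) := Quotient.exact h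
  have key : f ∘ Tuple.sort f = g ∘ Tuple.sort g := by
    apply List.ofFn_injective
    refine List.Perm.eq_of_sortedLE (Tuple.monotone_sort f).sortedLE_ofFn
      (Tuple.monotone_sort g).sortedLE_ofFn ?_
    exact ((Equiv.Perm.ofFn_comp_perm (Tuple.sort f) f).trans hperm).trans
      (Equiv.Perm.ofFn_comp_perm (Tuple.sort g) g).symm
  refine ⟨(Tuple.sort f)⁻¹.trans (Tuple.sort g), funext fun i => ?_⟩
  have h2 := congrFun key ((Tuple.sort f)⁻¹ i)
  simpa using h2

/-- A matrix with an eigenbasis is conjugate to the diagonal matrix of eigenvalues. -/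
private lemma exists_unit_conj {n : ℕ} (x : Matrix (Fin n) (Fin n) ℂ)
    (e : Fin n → ℂ) (b : Module.Basis (Fin n) ℂ (Fin n → ℂ))
    (hb : ∀ i, x.mulVec (b i) = e i • b i) :
    ∃ u : (Matrix (Fin n) (Fin n) ℂ)ˣ,
      x = (↑u : Matrix (Fin n) (Fin n) ℂ) * Matrix.diagonal e *
        (↑u⁻¹ : Matrix (Fin n) (Fin n) ℂ) := by
  classical
  set P : Matrix (Fin n) (Fin n) ℂ := (Pi.basisFun ℂ (Fin n)).toMatrix ⇑b with hPdef
  have hP : ∀ i j, P i j = b j i := fun i j => by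
    simp [hPdef, Module.Basis.toMatrix_apply]
  haveI : Invertible P := (Pi.basisFun ℂ (Fin n)).invertibleToMatrix b
  have hmul : x * P = P * Matrix.diagonal e := by
    ext i j
    rw [Matrix.mul_apply, Matrix.mul_diagonal, hP]
    have h1 := congrFun (hb j) i
    simp only [Matrix.mulVec, dotProduct, Pi.smul_apply, smul_eq_mul] at h1
    calc ∑ k, x i k * P k j = ∑ k, x i k * b j k := by simp_rw [hP]
      _ = e j * b j i := h1
      _ = b j i * e j := mul_comm _ _
  refine ⟨unitOfInvertible P, ?_⟩
  have h2 : x = P * Matrix.diagonal e * ⅟P := by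
    calc x = x * P * ⅟P := by rw [mul_assoc, mul_invOf_self, mul_one]
      _ = P * Matrix.diagonal e * ⅟P := by rw [hmul]
  exact h2

/-- The adjoint orbit `O(H₀) = {g H₀ g⁻¹ : g ∈ GL(n,ℂ)}` of a diagonal complex matrix
`H₀` is a closed subset of the space of `n×n` complex matrices. -/
theorem adjointOrbit_isClosed
    (n : ℕ) (d : Fin n → ℂ) :
    IsClosed {x : Matrix (Fin n) (Fin n) ℂ |
      ∃ g : GL (Fin n) ℂ, x = (g : Matrix (Fin n) (Fin n) ℂ) * Matrix.diagonal d *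
        ((g⁻¹ : GL (Fin n) ℂ) : Matrix (Fin n) (Fin n) ℂ)} := by
  classical
  set s : Finset ℂ := Finset.univ.image d with hs
  set p : ℂ[X] := ∏ a ∈ s, (X - C a) with hp
  have hset : {x : Matrix (Fin n) (Fin n) ℂ |
      ∃ g : GL (Fin n) ℂ, x = (g : Matrix (Fin n) (Fin n) ℂ) * Matrix.diagonal d *
        ((g⁻¹ : GL (Fin n) ℂ) : Matrix (Fin n) (Fin n) ℂ)}
      = {x : Matrix (Fin n) (Fin n) ℂ | aeval x p = 0} ∩
        ⋂ k : Fin n, {x : Matrix (Fin n) (Fin n) ℂ |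
          (((k : ℕ) : ℂ) • (1 : Matrix (Fin n) (Fin n) ℂ) - x).det
            = ∏ i, (((k : ℕ) : ℂ) - d i)} := by
    have hd0 : ∀ c : Fin n → ℂ, (∀ i, c i ∈ s) → aeval (Matrix.diagonal c) p = 0 := by
      intro c hc
      have h1 : aeval c p = 0 := by
        funext i
        have h2 : aeval c p i = aeval (c i) p := by
          exact (aeval_algHom_apply (Pi.evalAlgHom ℂ (fun _ => ℂ) i) c p).symm
        rw [Pi.zero_apply, h2, Polynomial.coe_aeval_eq_eval, hp, Polynomial.eval_prod]
        refine Finset.prod_eq_zero (hc i) ?_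
        simp
      have h3 := aeval_algHom_apply (Matrix.diagonalAlgHom (n := Fin n) (α := ℂ) ℂ) c p
      rw [h1, map_zero] at h3
      simpa using h3
    have hdet0 : ∀ (c : Fin n → ℂ) (z : ℂ),
        (z • (1 : Matrix (Fin n) (Fin n) ℂ) - Matrix.diagonal c).det = ∏ i, (z - c i) := by
      intro c z
      have h1 : z • (1 : Matrix (Fin n) (Fin n) ℂ) - Matrix.diagonal c
          = Matrix.diagonal (fun i => z - c i) := by
        ext i j
        rcases eq_or_ne i j with rfl | hij
        · simp
        · simp [Matrix.one_apply_ne hij, Matrix.diagonal_apply_ne _ hij]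
      rw [h1, Matrix.det_diagonal]
    have hconj : ∀ (u : (Matrix (Fin n) (Fin n) ℂ)ˣ) (y : Matrix (Fin n) (Fin n) ℂ) (z : ℂ),
        z • (1 : Matrix (Fin n) (Fin n) ℂ) -
            (↑u : Matrix (Fin n) (Fin n) ℂ) * y * (↑u⁻¹ : Matrix (Fin n) (Fin n) ℂ)
          = (↑u : Matrix (Fin n) (Fin n) ℂ) * (z • 1 - y) *
            (↑u⁻¹ : Matrix (Fin n) (Fin n) ℂ) := by
      intro u y z
      have h1 : (↑u : Matrix (Fin n) (Fin n) ℂ) * (z • 1) *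
          (↑u⁻¹ : Matrix (Fin n) (Fin n) ℂ) = z • 1 := by
        rw [mul_smul_comm, mul_one, smul_mul_assoc, Units.mul_inv]
      rw [mul_sub, sub_mul, h1]
    ext x
    simp only [Set.mem_setOf_eq, Set.mem_inter_iff, Set.mem_iInter]
    constructor
    · rintro ⟨g, rfl⟩
      constructor
      · have h4 : aeval ((conjAlgHom (R := ℂ) g) (Matrix.diagonal d)) p
            = (conjAlgHom (R := ℂ) g) (aeval (Matrix.diagonal d) p) :=
          aeval_algHom_apply (conjAlgHom (R := ℂ) g) (Matrix.diagonal d) p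
        rw [hd0 d (fun i => Finset.mem_image_of_mem d (Finset.mem_univ i)), map_zero] at h4
        exact h4
      · intro k
        rw [hconj g (Matrix.diagonal d) _, Matrix.det_units_conj, hdet0]
    · rintro ⟨h0, hdet⟩
      set f : Module.End ℂ (Fin n → ℂ) := Matrix.toLinAlgEquiv' x with hfdef
      have hpf : aeval f p = 0 := by
        rw [hfdef, show (Matrix.toLinAlgEquiv' x : Module.End ℂ (Fin n → ℂ))
            = Matrix.toLinAlgEquiv'.toAlgHom x from rfl,
          aeval_algHom_apply, h0, map_zero]
      have hsq : Squarefree p := by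
        have hsep : p.Separable := by
          rw [hp]
          exact Polynomial.separable_prod_X_sub_C_iff'.mpr fun a _ b _ hab => hab
        exact hsep.squarefree
      have hss : f.IsSemisimple := Module.End.isSemisimple_of_squarefree_aeval_eq_zero hsq hpf
      have htop : (⨆ μ : ℂ, f.eigenspace μ) = ⊤ := by
        have h1 := Module.End.iSup_maxGenEigenspace_eq_top f
        simp_rw [hss.isFinitelySemisimple.maxGenEigenspace_eq_eigenspace] at h1
        exact h1
      have hint : DirectSum.IsInternal f.eigenspace :=
        (DirectSum.isInternal_submodule_iff_iSupIndep_and_iSup_eq_top _).mpr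
          ⟨Module.End.eigenspaces_iSupIndep f, htop⟩
      let v : (μ : ℂ) → Module.Basis (Module.Basis.ofVectorSpaceIndex ℂ (f.eigenspace μ)) ℂ (f.eigenspace μ) :=
        fun μ => Module.Basis.ofVectorSpace ℂ _
      let b₀ := hint.collectedBasis v
      haveI : Fintype ((μ : ℂ) × Module.Basis.ofVectorSpaceIndex ℂ (f.eigenspace μ)) :=
        FiniteDimensional.fintypeBasisIndex b₀
      have hcard : Fintype.card ((μ : ℂ) × Module.Basis.ofVectorSpaceIndex ℂ (f.eigenspace μ)) = n := by
        rw [← Module.finrank_eq_card_basis b₀, Module.finrank_fin_fun]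
      let eqv := Fintype.equivFinOfCardEq hcard
      let b := b₀.reindex eqv
      let ev : Fin n → ℂ := fun i => (eqv.symm i).1
      have hb : ∀ i, x.mulVec (b i) = ev i • b i := by
        intro i
        have hmem : b i ∈ f.eigenspace (ev i) := by
          have h2 : b i = b₀ (eqv.symm i) := b₀.reindex_apply eqv i
          rw [h2]
          exact hint.collectedBasis_mem v _
        have h2 := Module.End.mem_eigenspace_iff.mp hmem
        rw [hfdef, Matrix.toLinAlgEquiv'_apply] at h2
        exact h2
      obtain ⟨u, hu⟩ := exists_unit_conj x ev b hb
      have hkey : ∀ k : Fin n, (∏ i, (((k : ℕ) : ℂ) - ev i)) = ∏ i, (((k : ℕ) : ℂ) - d i) := by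
        intro k
        rw [← hdet0 ev (((k : ℕ) : ℂ)), ← hdet k, hu, hconj u _ _, Matrix.det_units_conj]
      have hofn : ∀ e : Fin n → ℂ, (∏ i : Fin n, (X - C (e i)))
          = ((Multiset.ofList (List.ofFn e)).map (fun a => X - C a)).prod := by
        intro e
        rw [Finset.prod_eq_multiset_prod, ← Fin.univ_val_map e, Multiset.map_map]
        rfl
      have hQ : (∏ i : Fin n, (X - C (ev i))) = ∏ i : Fin n, (X - C (d i)) := by
        set Q1 : ℂ[X] := ∏ i : Fin n, (X - C (ev i)) with hQ1
        set Q2 : ℂ[X] := ∏ i : Fin n, (X - C (d i)) with hQ2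
        have hm1 : Q1.Monic := monic_prod_of_monic _ _ fun i _ => monic_X_sub_C _
        have hm2 : Q2.Monic := monic_prod_of_monic _ _ fun i _ => monic_X_sub_C _
        have hd1 : Q1.natDegree = n := by
          rw [hQ1, Polynomial.natDegree_prod _ _ fun i _ => Polynomial.X_sub_C_ne_zero _]
          simp
        have hd2 : Q2.natDegree = n := by
          rw [hQ2, Polynomial.natDegree_prod _ _ fun i _ => Polynomial.X_sub_C_ne_zero _]
          simp
        by_contra hne
        have hsub : Q1 - Q2 ≠ 0 := sub_ne_zero.mpr hne
        have hdlt : (Q1 - Q2).natDegree < n := by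
          rw [← hd1]
          refine Polynomial.natDegree_lt_natDegree hsub ?_
          refine Polynomial.degree_sub_lt ?_ hm1.ne_zero ?_
          · rw [Polynomial.degree_eq_natDegree hm1.ne_zero,
              Polynomial.degree_eq_natDegree hm2.ne_zero, hd1, hd2]
          · rw [hm1.leadingCoeff, hm2.leadingCoeff]
        refine hsub (Polynomial.eq_zero_of_natDegree_lt_card_of_eval_eq_zero _
          (f := fun k : Fin n => ((k : ℕ) : ℂ)) ?_ ?_ ?_)
        · intro a b hab
          exact Fin.val_injective (Nat.cast_injective hab)
        · intro k
          rw [Polynomial.eval_sub, hQ1, hQ2, Polynomial.eval_prod, Polynomial.eval_prod]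
          simp only [Polynomial.eval_sub, Polynomial.eval_X, Polynomial.eval_C]
          rw [hkey k, sub_self]
        · simpa using hdlt
      have hms : Multiset.ofList (List.ofFn ev) = Multiset.ofList (List.ofFn d) := by
        have h1 : (∏ i : Fin n, (X - C (ev i))).roots = Multiset.ofList (List.ofFn ev) := by
          rw [hofn ev, Polynomial.roots_multiset_prod_X_sub_C]
        have h2 : (∏ i : Fin n, (X - C (d i))).roots = Multiset.ofList (List.ofFn d) := by
          rw [hofn d, Polynomial.roots_multiset_prod_X_sub_C]
        rw [← h1, ← h2, hQ]
      letI : LinearOrder ℂ := LinearOrder.lift' (fun z => toLex (z.re, z.im))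
        (fun a b hab => Complex.ext
          (congrArg (fun q => (ofLex q).1) hab) (congrArg (fun q => (ofLex q).2) hab))
      obtain ⟨σ, hσ⟩ := exists_comp_perm hms
      let c := b.reindex σ
      have hc : ∀ i, x.mulVec (c i) = d i • c i := by
        intro i
        have h3 : c i = b (σ.symm i) := b.reindex_apply σ i
        rw [h3, hb]
        have h4 : ev (σ.symm i) = d i := by
          have h5 := congrFun hσ (σ.symm i)
          simpa using h5
        rw [h4]
      obtain ⟨w, hw⟩ := exists_unit_conj x d c hc
      exact ⟨w, hw⟩
  rw [hset]
  refine IsClosed.inter ?_ (isClosed_iInter fun k => ?_)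
  · have hc : Continuous fun x : Matrix (Fin n) (Fin n) ℂ => aeval x p := by
      have heq : (fun x : Matrix (Fin n) (Fin n) ℂ => aeval x p)
          = fun x => ∑ i ∈ Finset.range (p.natDegree + 1), p.coeff i • x ^ i := by
        funext x; rw [Polynomial.aeval_eq_sum_range]
      rw [heq]
      exact continuous_finset_sum _ fun i _ => (continuous_pow i).fun_const_smul _
    exact isClosed_eq hc continuous_const
  · have hc : Continuous fun x : Matrix (Fin n) (Fin n) ℂ =>
        (((k : ℕ) : ℂ) • (1 : Matrix (Fin n) (Fin n) ℂ) - x).det :=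
      (continuous_const.sub continuous_id).matrix_det
    exact isClosed_eq hc continuous_const
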